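/- Let Γ = (V,E) be a d-regular connected finite graph with d ≥ 2, and let δ < λ₁(Γ)/12 where λ₁(Γ) is the normalized spectral gap. Then after removing at most 2δd|V| edges from Γ, the resulting graph has a connected component containing at least 2|V|/3 vertices. -/

import Mathlib

open Finset

lemma quadform {V : Type*} [Fintype V] [DecidableEq V]
    (G : SimpleGraph V) [DecidableRel G.Adj]
    (d : ℕ) (hd : 0 < d) (hreg : G.IsRegularOfDegree d) (φ : V → ℝ) :
    ∑ v, (((1 : Matrix V V ℝ) - (d:ℝ)⁻¹ • G.adjMatrix ℝ).mulVec φ v) * φ v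
      = (2*(d:ℝ))⁻¹ * ∑ v, ∑ w ∈ G.neighborFinset v, (φ v - φ w)^2 := by
  have hd' : (d:ℝ) ≠ 0 := Nat.cast_ne_zero.mpr hd.ne'
  set S1 := ∑ v, (φ v)^2 with hS1
  set S3 := ∑ v, φ v * ∑ w ∈ G.neighborFinset v, φ w with hS3
  have hmv : ∀ v, (((1 : Matrix V V ℝ) - (d:ℝ)⁻¹ • G.adjMatrix ℝ).mulVec φ v)
      = φ v - (d:ℝ)⁻¹ * ∑ w ∈ G.neighborFinset v, φ w := by
    intro v
    simp [Matrix.sub_mulVec, Matrix.smul_mulVec, Matrix.one_mulVec,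
      SimpleGraph.adjMatrix_mulVec_apply]
  have hlhs : ∑ v, (((1 : Matrix V V ℝ) - (d:ℝ)⁻¹ • G.adjMatrix ℝ).mulVec φ v) * φ v
      = S1 - (d:ℝ)⁻¹ * S3 := by
    simp only [hmv, sub_mul, Finset.sum_sub_distrib, hS1, hS3, Finset.mul_sum]
    congr 1
    · apply Finset.sum_congr rfl; intro v _; ring
    · apply Finset.sum_congr rfl; intro v _
      rw [Finset.sum_mul]
      apply Finset.sum_congr rfl; intro w _; ring
  have hs1 : ∑ v, ∑ w ∈ G.neighborFinset v, (φ v)^2 = (d:ℝ) * S1 := by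
    simp only [Finset.sum_const, hreg _, G.card_neighborFinset_eq_degree, nsmul_eq_mul, hS1,
      Finset.mul_sum]
  have hswap : ∑ v, ∑ w ∈ G.neighborFinset v, (φ w)^2
      = ∑ w, ∑ v ∈ G.neighborFinset w, (φ w)^2 := by
    apply Finset.sum_comm'
    intro x y
    simp [SimpleGraph.mem_neighborFinset, G.adj_comm]
  have hs2 : ∑ v, ∑ w ∈ G.neighborFinset v, (φ w)^2 = (d:ℝ) * S1 := by
    rw [hswap]
    simp only [Finset.sum_const, hreg _, G.card_neighborFinset_eq_degree, nsmul_eq_mul, hS1,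
      Finset.mul_sum]
  have hs3 : ∑ v, ∑ w ∈ G.neighborFinset v, (2*(φ v * φ w)) = 2 * S3 := by
    rw [hS3, Finset.mul_sum]
    apply Finset.sum_congr rfl; intro v _
    rw [Finset.mul_sum, Finset.mul_sum]
  have expand : ∑ v, ∑ w ∈ G.neighborFinset v, (φ v - φ w)^2
      = (d:ℝ) * S1 - 2*S3 + (d:ℝ)*S1 := by
    simp only [show ∀ (a b : ℝ), (a-b)^2 = a^2 - 2*(a*b) + b^2 from fun a b => by ring]
    simp only [Finset.sum_add_distrib, Finset.sum_sub_distrib]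
    rw [hs1, hs2, hs3]
  rw [hlhs, expand]
  field_simp
  ring

lemma const_of_ker {V : Type*} [Fintype V] [DecidableEq V]
    (G : SimpleGraph V) [DecidableRel G.Adj] (hconn : G.Connected)
    (d : ℕ) (hd : 0 < d) (hreg : G.IsRegularOfDegree d) (φ : V → ℝ)
    (h : ((1 : Matrix V V ℝ) - (d:ℝ)⁻¹ • G.adjMatrix ℝ).mulVec φ = 0) :
    ∀ u v, φ u = φ v := by
  have hQ : ∑ v, ∑ w ∈ G.neighborFinset v, (φ v - φ w)^2 = 0 := by
    have h0 : ∑ v, (((1 : Matrix V V ℝ) - (d:ℝ)⁻¹ • G.adjMatrix ℝ).mulVec φ v) * φ v = 0 := by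
      simp [h]
    rw [quadform G d hd hreg φ] at h0
    have h2 : (2*(d:ℝ))⁻¹ ≠ 0 := by positivity
    exact (mul_eq_zero.mp h0).resolve_left h2
  have hadj : ∀ a b, G.Adj a b → φ a = φ b := by
    intro a b hab
    have h1 : ∀ v ∈ (univ : Finset V), (0:ℝ) ≤ ∑ w ∈ G.neighborFinset v, (φ v - φ w)^2 :=
      fun v _ => Finset.sum_nonneg fun w _ => sq_nonneg _
    have h2 := (Finset.sum_eq_zero_iff_of_nonneg h1).mp hQ a (Finset.mem_univ a)
    have h3 : ∀ w ∈ G.neighborFinset a, (0:ℝ) ≤ (φ a - φ w)^2 := fun w _ => sq_nonneg _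
    have h4 := (Finset.sum_eq_zero_iff_of_nonneg h3).mp h2 b
      ((SimpleGraph.mem_neighborFinset G a b).mpr hab)
    have := sq_eq_zero_iff.mp h4
    linarith
  intro u v
  obtain ⟨p⟩ := hconn.preconnected u v
  induction p with
  | nil => rfl
  | cons hadj' p ih => exact (hadj _ _ hadj').trans ih

lemma rayleigh {V : Type*} [Fintype V] [DecidableEq V]
    (G : SimpleGraph V) [DecidableRel G.Adj] (hconn : G.Connected)
    (d : ℕ) (hd : 0 < d) (hreg : G.IsRegularOfDegree d) (lam : ℝ)
    (hmin : ∀ μ : ℝ, Module.End.HasEigenvalue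
      (Matrix.toLin' ((1 : Matrix V V ℝ) - (d : ℝ)⁻¹ • G.adjMatrix ℝ)) μ → μ ≠ 0 → lam ≤ μ)
    (φ : V → ℝ) (hzero : ∑ v, φ v = 0) :
    lam * ∑ v, (φ v)^2
      ≤ ∑ v, (((1 : Matrix V V ℝ) - (d:ℝ)⁻¹ • G.adjMatrix ℝ).mulVec φ v) * φ v := by
  classical
  set L : Matrix V V ℝ := (1 : Matrix V V ℝ) - (d:ℝ)⁻¹ • G.adjMatrix ℝ with hL
  have hherm : L.IsHermitian := by
    unfold Matrix.IsHermitian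
    ext i j
    simp only [hL, Matrix.conjTranspose_apply, Matrix.sub_apply, Matrix.smul_apply,
      Matrix.one_apply, SimpleGraph.adjMatrix_apply, smul_eq_mul, star_trivial]
    have h1 : (if j = i then (1:ℝ) else 0) = (if i = j then 1 else 0) := by simp [eq_comm]
    have h2 : (if G.Adj j i then (1:ℝ) else 0) = (if G.Adj i j then 1 else 0) := by
      simp only [if_congr (G.adj_comm j i) rfl rfl]
    rw [h1, h2]
  have hT : (Matrix.toEuclideanLin L).IsSymmetric :=
    (Matrix.isHermitian_iff_isSymmetric).mp hherm
  set T := Matrix.toEuclideanLin L with hTdef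
  have hTapp : ∀ (x : EuclideanSpace ℝ V) (v : V), T x v = L.mulVec x v := by
    intro x v; rfl
  have hn : Module.finrank ℝ (EuclideanSpace ℝ V) = Fintype.card V := finrank_euclideanSpace
  set b := hT.eigenvectorBasis hn with hb
  set μ := hT.eigenvalues hn with hμ
  have heigb : ∀ i, T (b i) = μ i • b i := fun i => hT.apply_eigenvectorBasis hn i
  have hinner : ∀ x y : EuclideanSpace ℝ V, (inner ℝ x y : ℝ) = ∑ v, x v * y v := by
    intro x y; simp [PiLp.inner_apply]; exact Finset.sum_congr rfl fun _ _ => mul_comm _ _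
  have hinner2 : ∀ x y : EuclideanSpace ℝ (Fin (Fintype.card V)),
      (inner ℝ x y : ℝ) = ∑ i, x i * y i := by
    intro x y; simp [PiLp.inner_apply]; exact Finset.sum_congr rfl fun _ _ => mul_comm _ _
  have hmin' : ∀ i, μ i ≠ 0 → lam ≤ μ i := by
    intro i hi
    refine hmin (μ i) ?_ hi
    refine Module.End.hasEigenvalue_of_hasEigenvector
      (x := WithLp.ofLp (b i)) ⟨?_, ?_⟩
    · rw [Module.End.mem_eigenspace_iff, Matrix.toLin'_apply]
      funext v
      have := congrFun (congrArg (fun z => WithLp.ofLp z) (heigb i)) v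
      simpa [hTapp] using this
    · intro h0
      exact (hT.hasEigenvector_eigenvectorBasis hn i).2 (by exact (WithLp.ofLp_eq_zero 2).mp h0)
  set φ' : EuclideanSpace ℝ V := (WithLp.toLp 2 φ) with hφ'
  set c : Fin (Fintype.card V) → ℝ := fun i => b.repr φ' i with hc
  have hcval : ∀ i, c i = ∑ v, b i v * φ v := by
    intro i
    rw [hc]
    simp only [b.repr_apply_apply]
    rw [hinner]
  have hsum_c_sq : ∑ i, (c i)^2 = ∑ v, (φ v)^2 := by
    have h1 := b.repr.inner_map_map φ' φ'
    rw [hinner2, hinner] at h1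
    simp only [← pow_two] at h1
    exact h1
  have hTφrepr : ∀ i, b.repr (T φ') i = μ i * c i := by
    intro i
    rw [b.repr_apply_apply, ← hT (b i) φ', heigb i]
    rw [real_inner_smul_left, ← b.repr_apply_apply]
  have henergy : ∑ v, (L.mulVec φ v) * φ v = ∑ i, μ i * (c i)^2 := by
    have h1 := b.repr.inner_map_map (T φ') φ'
    rw [hinner2, hinner] at h1
    have h2 : ∑ v, T φ' v * φ' v = ∑ v, (L.mulVec φ v) * φ v := by
      apply Finset.sum_congr rfl; intro v _
      rw [hTapp]
    rw [h2] at h1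
    rw [← h1]
    apply Finset.sum_congr rfl; intro i _
    rw [hTφrepr i]
    have : b.repr φ' i = c i := rfl
    rw [this]
    ring
  have hzero_c : ∀ i, μ i = 0 → c i = 0 := by
    intro i h0
    have hker : L.mulVec (WithLp.ofLp (b i)) = 0 := by
      funext v
      have := congrFun (congrArg (fun z => WithLp.ofLp z) (heigb i)) v
      rw [h0] at this
      simpa [hTapp] using this
    have hconst := const_of_ker G hconn d hd hreg _ hker
    obtain ⟨v0⟩ := hconn.nonempty
    rw [hcval i]
    have : ∀ v, b i v = b i v0 := fun v => hconst v v0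
    calc ∑ v, b i v * φ v = ∑ v, b i v0 * φ v := by
          apply Finset.sum_congr rfl; intro v _; rw [this v]
      _ = b i v0 * ∑ v, φ v := by rw [Finset.mul_sum]
      _ = 0 := by rw [hzero, mul_zero]
  rw [henergy, ← hsum_c_sq, Finset.mul_sum]
  apply Finset.sum_le_sum
  intro i _
  by_cases h0 : μ i = 0
  · rw [h0, hzero_c i h0]; simp
  · exact mul_le_mul_of_nonneg_right (hmin' i h0) (sq_nonneg _)

lemma lam_pos {V : Type*} [Fintype V] [DecidableEq V]
    (G : SimpleGraph V) [DecidableRel G.Adj]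
    (d : ℕ) (hd : 0 < d) (hreg : G.IsRegularOfDegree d) (lam : ℝ)
    (heig : Module.End.HasEigenvalue
      (Matrix.toLin' ((1 : Matrix V V ℝ) - (d : ℝ)⁻¹ • G.adjMatrix ℝ)) lam)
    (hne : lam ≠ 0) : 0 < lam := by
  obtain ⟨x, hx⟩ := heig.exists_hasEigenvector
  have hxeq : ((1 : Matrix V V ℝ) - (d:ℝ)⁻¹ • G.adjMatrix ℝ).mulVec x = lam • x := by
    have := hx.apply_eq_smul
    rwa [Matrix.toLin'_apply] at this
  have h1 : ∑ v, (((1 : Matrix V V ℝ) - (d:ℝ)⁻¹ • G.adjMatrix ℝ).mulVec x v) * x v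
      = lam * ∑ v, (x v)^2 := by
    rw [hxeq, Finset.mul_sum]
    apply Finset.sum_congr rfl; intro v _
    simp [Pi.smul_apply]; ring
  have h2 : (0:ℝ) ≤ lam * ∑ v, (x v)^2 := by
    rw [← h1, quadform G d hd hreg x]
    have : (0:ℝ) ≤ ∑ v, ∑ w ∈ G.neighborFinset v, (x v - x w)^2 :=
      Finset.sum_nonneg fun v _ => Finset.sum_nonneg fun w _ => sq_nonneg _
    positivity
  have h3 : 0 < ∑ v, (x v)^2 := by
    obtain ⟨v, hv⟩ := Function.ne_iff.mp hx.2
    apply Finset.sum_pos' (fun w _ => sq_nonneg _) ⟨v, Finset.mem_univ v, pow_two_pos_of_ne_zero hv⟩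
  rcases lt_trichotomy lam 0 with h | h | h
  · nlinarith
  · exact absurd h hne
  · exact h

theorem stmt8 {V : Type*} [Fintype V] [DecidableEq V]
    (G : SimpleGraph V) [DecidableRel G.Adj] (hconn : G.Connected)
    (d : ℕ) (hd : 2 ≤ d) (hreg : G.IsRegularOfDegree d)
    (lam : ℝ)
    (heig : Module.End.HasEigenvalue
      (Matrix.toLin' ((1 : Matrix V V ℝ) - (d : ℝ)⁻¹ • G.adjMatrix ℝ)) lam)
    (hne : lam ≠ 0)
    (hmin : ∀ μ : ℝ, Module.End.HasEigenvalue
      (Matrix.toLin' ((1 : Matrix V V ℝ) - (d : ℝ)⁻¹ • G.adjMatrix ℝ)) μ → μ ≠ 0 → lam ≤ μ)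
    (δ : ℝ) (hδ : δ < lam / 12)
    (G' : SimpleGraph V) [DecidableRel G'.Adj] (hle : G' ≤ G)
    (hrem : (((G.edgeFinset \ G'.edgeFinset).card : ℝ)) ≤ 2 * δ * d * Fintype.card V) :
    ∃ K : G'.ConnectedComponent, (2 * (Fintype.card V : ℝ)) / 3 ≤ (K.supp.ncard : ℝ) := by
  classical
  by_contra hcon
  push_neg at hcon
  set n := Fintype.card V with hn
  have hd0 : 0 < d := lt_of_lt_of_le two_pos hd
  have hnpos : 0 < n := Fintype.card_pos (α := V) (h := hconn.nonempty)
  have hlam : 0 < lam := lam_pos G d hd0 hreg lam heig hne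
  -- component finsets
  set Kf : V → Finset V := fun u => univ.filter (fun v => G'.Reachable u v) with hKf
  have hKmem : ∀ u v, v ∈ Kf u ↔ G'.Reachable u v := by
    intro u v; simp [hKf]
  have hKself : ∀ u, u ∈ Kf u := fun u => (hKmem u u).mpr (SimpleGraph.Reachable.refl u)
  have hKcard : ∀ u, ((Kf u).card : ℝ) < 2 * n / 3 := by
    intro u
    have h1 := hcon (G'.connectedComponentMk u)
    have h2 : (G'.connectedComponentMk u).supp = (↑(Kf u) : Set V) := by
      ext v
      simp only [SimpleGraph.ConnectedComponent.mem_supp_iff, Finset.coe_filter,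
        Set.mem_setOf_eq, hKf, Finset.mem_univ, true_and]
      constructor
      · intro h; exact (SimpleGraph.ConnectedComponent.eq.mp h).symm
      · intro h; exact SimpleGraph.ConnectedComponent.eq.mpr h.symm
    rw [h2, Set.ncard_coe_finset] at h1
    linarith [h1]
  -- minimal closed set of size ≥ n/3
  set C : Finset (Finset V) :=
    univ.filter (fun W => (∀ u ∈ W, ∀ v, G'.Reachable u v → v ∈ W) ∧ n ≤ 3 * W.card) with hC
  have hCmem : ∀ W : Finset V, W ∈ C ↔
      ((∀ u ∈ W, ∀ v, G'.Reachable u v → v ∈ W) ∧ n ≤ 3 * W.card) := by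
    intro W; simp [hC]
  have hCne : (univ : Finset V) ∈ C := by
    rw [hCmem]
    exact ⟨fun u _ v _ => Finset.mem_univ v, by simpa [hn] using Nat.le_mul_of_pos_left n (by norm_num : 0 < 3)⟩
  obtain ⟨W, hWC, hWmin⟩ := Finset.exists_min_image C Finset.card ⟨univ, hCne⟩
  obtain ⟨hWclosed, hWge⟩ := (hCmem W).mp hWC
  have hKsub : ∀ u ∈ W, Kf u ⊆ W := by
    intro u hu v hv
    exact hWclosed u hu v ((hKmem u v).mp hv)
  have hWpos : 0 < W.card := by omega
  have hWle : 3 * W.card ≤ 2 * n := by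
    by_contra h3
    push_neg at h3
    by_cases hcase : ∃ u ∈ W, n ≤ 3 * (W \ Kf u).card
    · obtain ⟨u, hu, hucard⟩ := hcase
      have hW'C : (W \ Kf u) ∈ C := by
        rw [hCmem]
        refine ⟨?_, hucard⟩
        intro a ha v hav
        rw [Finset.mem_sdiff] at ha ⊢
        refine ⟨hWclosed a ha.1 v hav, ?_⟩
        intro hv
        exact ha.2 ((hKmem u a).mpr (((hKmem u v).mp hv).trans hav.symm))
      have hlt : (W \ Kf u).card < W.card := by
        apply Finset.card_lt_card
        rw [Finset.ssubset_iff_of_subset (Finset.sdiff_subset)]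
        exact ⟨u, hu, by simp [hKself u]⟩
      exact absurd (hWmin _ hW'C) (not_le.mpr hlt)
    · push_neg at hcase
      obtain ⟨u, hu⟩ := Finset.card_pos.mp hWpos
      have hKuW : Kf u ⊆ W := hKsub u hu
      have hsd : (W \ Kf u).card = W.card - (Kf u).card := Finset.card_sdiff_of_subset hKuW
      have hKule : (Kf u).card ≤ W.card := Finset.card_le_card hKuW
      -- Kf u is strictly smaller than W
      have hKultW : (Kf u).card < W.card := by
        have h1 := hKcard u
        have : ((Kf u).card : ℝ) < (W.card : ℝ) := by
          have h2 : (2:ℝ) * n < 3 * W.card := by exact_mod_cast h3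
          linarith
        exact_mod_cast this
      have hwex : ((W \ Kf u)).Nonempty := by
        rw [← Finset.card_pos, hsd]
        omega
      obtain ⟨w, hw⟩ := hwex
      rw [Finset.mem_sdiff] at hw
      have hwW := hw.1
      have hwnotKu := hw.2
      have hnotreach : ¬ G'.Reachable u w := fun h => hwnotKu ((hKmem u w).mpr h)
      have hKwsub : Kf w ⊆ W \ Kf u := by
        intro x hx
        rw [Finset.mem_sdiff]
        refine ⟨hKsub w hwW hx, ?_⟩
        intro hxu
        exact hnotreach (((hKmem u x).mp hxu).trans ((hKmem w x).mp hx).symm)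
      have hKusub2 : Kf u ⊆ W \ Kf w := by
        intro x hx
        rw [Finset.mem_sdiff]
        refine ⟨hKsub u hu hx, ?_⟩
        intro hxw
        exact hnotreach (((hKmem u x).mp hx).trans ((hKmem w x).mp hxw).symm)
      have h1 := hcase u hu
      have h2 := hcase w hwW
      have h4 := Finset.card_le_card hKwsub
      have h5 := Finset.card_le_card hKusub2
      have h6 : (W \ Kf w).card ≤ W.card := Finset.card_le_card Finset.sdiff_subset
      omega
  -- crossing pairs
  set P : Finset (V × V) :=
    univ.filter (fun p => p.1 ∈ W ∧ p.2 ∉ W ∧ G.Adj p.1 p.2) with hP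
  set P' : Finset (V × V) :=
    univ.filter (fun p => p.1 ∉ W ∧ p.2 ∈ W ∧ G.Adj p.1 p.2) with hP'
  have hPP' : P'.card = P.card := by
    apply Finset.card_bij (fun p _ => Prod.swap p)
    · intro p hp
      simp only [hP, hP', Finset.mem_filter, Finset.mem_univ, true_and, Prod.fst_swap,
        Prod.snd_swap] at hp ⊢
      exact ⟨hp.2.1, hp.1, hp.2.2.symm⟩
    · intro p hp q hq h
      exact Prod.swap_injective h
    · intro p hp
      refine ⟨Prod.swap p, ?_, (Prod.swap_swap p)⟩
      simp only [hP, hP', Finset.mem_filter, Finset.mem_univ, true_and, Prod.fst_swap,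
        Prod.snd_swap] at hp ⊢
      exact ⟨hp.2.1, hp.1, hp.2.2.symm⟩
  have hPedge : P.card ≤ (G.edgeFinset \ G'.edgeFinset).card := by
    apply Finset.card_le_card_of_injOn (s := P) (t := G.edgeFinset \ G'.edgeFinset) (fun p => s(p.1, p.2))
    · intro p hp
      simp only [Finset.mem_coe, hP, Finset.mem_filter, Finset.mem_univ, true_and] at hp
      obtain ⟨h1, h2, h3⟩ := hp
      rw [Finset.mem_coe, Finset.mem_sdiff]
      constructor
      · rw [SimpleGraph.mem_edgeFinset]
        exact h3
      · intro hmem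
        rw [SimpleGraph.mem_edgeFinset] at hmem
        have hadj' : G'.Adj p.1 p.2 := hmem
        exact h2 (hWclosed p.1 h1 p.2 hadj'.reachable)
    · intro p hp q hq hpq
      simp only [Finset.mem_coe, hP, Finset.mem_filter, Finset.mem_univ, true_and] at hp hq
      have h := Sym2.eq_iff.mp hpq
      rcases h with ⟨ha, hb⟩ | ⟨ha, hb⟩
      · exact Prod.ext ha hb
      · exact absurd (ha ▸ hp.1) hq.2.1
  set m : ℝ := (W.card : ℝ) with hm
  set t : ℝ := m / n with ht
  set φ : V → ℝ := fun v => (if v ∈ W then (1:ℝ) else 0) - t with hφ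
  have hnR : (0:ℝ) < n := by exact_mod_cast hnpos
  have hnne : (n:ℝ) ≠ 0 := ne_of_gt hnR
  have hindsum : ∑ v, (if v ∈ W then (1:ℝ) else 0) = m := by
    rw [Finset.sum_ite_mem, Finset.univ_inter, Finset.sum_const, hm]
    simp
  have hzero : ∑ v, φ v = 0 := by
    simp only [hφ, Finset.sum_sub_distrib, hindsum, Finset.sum_const, Finset.card_univ, ← hn,
      nsmul_eq_mul]
    rw [ht]
    field_simp
    ring
  have hnormsq : ∑ v, (φ v)^2 = m - m^2/n := by
    have expand : ∀ v, (φ v)^2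
        = (if v ∈ W then (1:ℝ) else 0) - 2*t*(if v ∈ W then (1:ℝ) else 0) + t^2 := by
      intro v; rw [hφ]; by_cases h : v ∈ W <;> simp [h] <;> ring
    simp only [expand, Finset.sum_add_distrib, Finset.sum_sub_distrib, ← Finset.mul_sum,
      hindsum, Finset.sum_const, Finset.card_univ, ← hn, nsmul_eq_mul]
    rw [ht]
    field_simp
    ring
  have hQ : ∑ v, ∑ w ∈ G.neighborFinset v, (φ v - φ w)^2 = (P.card : ℝ) + (P'.card : ℝ) := by
    have hsplit : ∀ v w : V, (φ v - φ w)
        = (if v ∈ W then (1:ℝ) else 0) - (if w ∈ W then (1:ℝ) else 0) := by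
      intro v w; rw [hφ]; ring
    calc ∑ v, ∑ w ∈ G.neighborFinset v, (φ v - φ w)^2
        = ∑ p : V × V, if G.Adj p.1 p.2 then (φ p.1 - φ p.2)^2 else 0 := by
          rw [Fintype.sum_prod_type]
          apply Finset.sum_congr rfl
          intro v _
          rw [SimpleGraph.neighborFinset_eq_filter, Finset.sum_filter]
      _ = ∑ p : V × V, ((if p.1 ∈ W ∧ p.2 ∉ W ∧ G.Adj p.1 p.2 then (1:ℝ) else 0)
            + (if p.1 ∉ W ∧ p.2 ∈ W ∧ G.Adj p.1 p.2 then (1:ℝ) else 0)) := by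
          apply Finset.sum_congr rfl
          intro p _
          rw [hsplit]
          by_cases h1 : G.Adj p.1 p.2 <;> by_cases h2 : p.1 ∈ W <;> by_cases h3 : p.2 ∈ W <;>
            simp [h1, h2, h3] <;> norm_num
      _ = (P.card : ℝ) + (P'.card : ℝ) := by
          rw [Finset.sum_add_distrib, Finset.sum_boole, Finset.sum_boole, hP, hP']
  have hray := rayleigh G hconn d hd0 hreg lam hmin φ hzero
  have hquad := quadform G d hd0 hreg φ
  have hdR : (0:ℝ) < d := by exact_mod_cast hd0
  have hPle : ((P.card : ℝ)) ≤ 2 * δ * d * n := le_trans (by exact_mod_cast hPedge) hrem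
  rw [hnormsq, hquad, hQ, hPP'] at hray
  have hmn1 : (n:ℝ) ≤ 3 * m := by rw [hm]; exact_mod_cast hWge
  have hmn2 : 3 * m ≤ 2 * (n:ℝ) := by rw [hm]; exact_mod_cast hWle
  have hbound : 2 * (n:ℝ) / 9 ≤ m - m^2/n := by
    have h9 : (0:ℝ) ≤ (3*m - n) * (2*n - 3*m) := mul_nonneg (by linarith) (by linarith)
    have heq : m - m^2/n = (m*n - m^2)/n := by field_simp
    rw [heq, div_le_div_iff₀ (by norm_num : (0:ℝ) < 9) hnR]
    nlinarith [h9]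
  have h2 : (2*(d:ℝ))⁻¹ * ((P.card:ℝ) + P.card) = (P.card:ℝ)/d := by
    field_simp
    ring
  have h3 : (P.card:ℝ)/d ≤ 2*(δ*n) := by
    rw [div_le_iff₀ hdR]
    calc (P.card:ℝ) ≤ 2*δ*d*n := hPle
      _ = 2*(δ*n)*d := by ring
  have h1 : lam * (2*n/9) ≤ lam * (m - m^2/n) := mul_le_mul_of_nonneg_left hbound hlam.le
  have hfinal : lam * (2*n/9) ≤ 2*(δ*n) := by
    rw [h2] at hray
    linarith
  have hdn : δ*n < (lam/12)*n := mul_lt_mul_of_pos_right hδ hnR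
  have hln : 0 < lam * n := mul_pos hlam hnR
  have e1 : lam * (2*n/9) = (2/9)*(lam*n) := by ring
  have e2 : (lam/12)*n = (1/12)*(lam*n) := by ring
  linarith
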